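/- Let μ be a cardinal, let θ < ∂ be cardinals with ∂ regular, ∂ > 2^θ, and 2^θ ≤ μ, and let I be a linear order of cardinality μ satisfying: (i) for every I₀ ⊆ I with |I₀| ≤ θ, the set {t ∈ I \ I₀ : no t' ∈ I \ I₀ with t' ≠ t realizes the same cut of I₀ as t} has cardinality ≤ 2^θ; (ii) for all a < b in I, I order-embeds into the open interval (a, b); (iii) every linear order of cardinality ≤ θ order-embeds into I; (iv) I contains a strictly increasing sequence of length μ and a strictly decreasing sequence of length μ. Then (A) implies (B), where (A): I₀ ⊆ I with |I₀| ≤ θ; I₁ is a linear order extending I₀; ⟨u_n : n < ω⟩ is an increasing sequence of subsets of θ with union θ; ⟨t̄¹_α : α < ∂⟩ with t̄¹_α ∈ ^θI₁ is a sequence indiscernible over I₀ in I₁ (for quantifier-free formulas); and for every n, the suborder I_{1,n} of I₁ with universe {t¹_{α,i} : i ∈ u_n, α < ∂} ∪ I₀ order-embeds into I over I₀; and (B): there is a sequence ⟨t̄_α : α < μ⟩ with t̄_α ∈ ^θI, indiscernible over I₀ in I, such that for every n < ω the quantifier-free type of t̄₀⌢…⌢t̄_n over I₀ in I equals the quantifier-free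 type of t̄¹₀⌢…⌢t̄¹_n over I₀ in I₁. -/

import Mathlib

open Cardinal

universe u v w

/-- `t` and `t'` realize the same cut of `I₀`. -/
def SameCut {I : Type u} [LinearOrder I] (I₀ : Set I) (t t' : I) : Prop :=
  ∀ s ∈ I₀, (s < t ↔ s < t')

/-- Property (i): for every `I₀ ⊆ I` of size `≤ θ`, the set of elements of `I \ I₀`
realizing a cut of `I₀` realized by no other element of `I \ I₀` has size `≤ 2^θ`. -/
def CutIsolatedSmall (I : Type u) [LinearOrder I] (θ : Cardinal.{u}) : Prop :=
  ∀ I₀ : Set I, #I₀ ≤ θ →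
    #{t : I | t ∉ I₀ ∧ ∀ t' : I, t' ∉ I₀ → t' ≠ t → ¬ SameCut I₀ t t'} ≤ 2 ^ θ

/-- Property (ii): `I` order-embeds into each of its nonempty open intervals. -/
def SelfEmbedsIntervals (I : Type u) [LinearOrder I] : Prop :=
  ∀ a b : I, a < b → Nonempty (I ↪o (Set.Ioo a b))

/-- Property (iii): every linear order of cardinality `≤ θ` order-embeds into `I`. -/
def UnivForSmall (I : Type u) [LinearOrder I] (θ : Cardinal.{u}) : Prop :=
  ∀ (A : Type u) [LinearOrder A], #A ≤ θ → Nonempty (A ↪o I)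

/-- Property (iv): `I` contains strictly increasing and strictly decreasing sequences
of length `μ`. -/
def LongMonotone (I : Type u) [LinearOrder I] (μ : Cardinal.{u}) : Prop :=
  (∃ f : μ.ord.ToType → I, StrictMono f) ∧ (∃ f : μ.ord.ToType → I, StrictAnti f)

/-- Property (v): for every linear order `A` of cardinality `≤ θ`, the lexicographic
product `I ×ₗ A` order-embeds into `I`. -/
def LexAbsorb (I : Type u) [LinearOrder I] (θ : Cardinal.{u}) : Prop :=
  ∀ (A : Type u) [LinearOrder A], #A ≤ θ → Nonempty (Lex (I × A) ↪o I)

/-- Two `ι`-indexed tuples of elements of the linear order `β` realize the same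
quantifier-free type over the subset `B ⊆ β`: corresponding entries stand in the same
order relations with each other and with each element of `B`. -/
def SameQfType {β : Type u} [LinearOrder β] (B : Set β) {ι : Type v}
    (x y : ι → β) : Prop :=
  (∀ i j, x i < x j ↔ y i < y j) ∧ (∀ i j, x i = x j ↔ y i = y j) ∧
  (∀ i, ∀ b ∈ B, ((x i < b ↔ y i < b) ∧ (b < x i ↔ b < y i) ∧ (x i = b ↔ y i = b)))

/-- A tuple `x` in the linear order `β` (over the subset `B ⊆ β`) and a tuple `y` in the
linear order `γ` (over the copy `e '' B` of `B`) realize the same quantifier-free type: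
corresponding entries stand in the same order relations with each other and with the
corresponding copies of each element of `B`. -/
def SameQfType2 {β : Type u} {γ : Type w} [LinearOrder β] [LinearOrder γ]
    (B : Set β) (e : B → γ) {ι : Type v} (x : ι → β) (y : ι → γ) : Prop :=
  (∀ i j, x i < x j ↔ y i < y j) ∧ (∀ i j, x i = x j ↔ y i = y j) ∧
  (∀ i (b : B), ((x i < (b : β) ↔ y i < e b) ∧ ((b : β) < x i ↔ e b < y i) ∧
    (x i = (b : β) ↔ y i = e b)))

/-- `⟨t̄_α : α < bound⟩` is an indiscernible sequence of `Θ`-tuples in the linear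
order `β` over `B` (for quantifier-free formulas). -/
def IndiscBdd {β : Type u} [LinearOrder β] (B : Set β) {Θ : Type v}
    (bound : Ordinal.{w}) (t : Ordinal.{w} → Θ → β) : Prop :=
  ∀ (n : ℕ) (a b : Fin n → Ordinal.{w}),
    (∀ k, a k < bound) → (∀ k, b k < bound) → StrictMono a → StrictMono b →
      SameQfType B (fun q : Fin n × Θ => t (a q.1) q.2)
        (fun q : Fin n × Θ => t (b q.1) q.2)

/-- `⟨t̄_s : s ∈ A⟩` is an indiscernible sequence of `Θ`-tuples in the linear order `β`
over `B` (for quantifier-free formulas), indexed by the linear order `A`. -/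
def IndiscIdx {β : Type u} [LinearOrder β] (B : Set β) {A : Type v} [LinearOrder A]
    {Θ : Type w} (t : A → Θ → β) : Prop :=
  ∀ (n : ℕ) (a b : Fin n → A), StrictMono a → StrictMono b →
    SameQfType B (fun q : Fin n × Θ => t (a q.1) q.2)
      (fun q : Fin n × Θ => t (b q.1) q.2)

open Cardinal


lemma sm2' {β : Type*} [Preorder β] {x y : β} (h : x < y) : StrictMono ![x, y] := by
  intro a b hab
  fin_cases a <;> fin_cases b <;> simp_all

lemma sm1' {β : Type*} [Preorder β] (x : β) : StrictMono ![x] := by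
  intro a b hab
  fin_cases a <;> fin_cases b <;> simp_all

lemma exists_orderEmb_finite {I : Type u} [LinearOrder I] [Infinite I]
    (E : Type u) [LinearOrder E] [Finite E] : Nonempty (E ↪o I) := by
  cases nonempty_fintype E
  set n := Fintype.card E with hn
  let f := Infinite.natEmbedding I
  let s : Finset I := (Finset.range n).image f
  have hs : s.card = n := by
    rw [Finset.card_image_of_injective _ f.injective, Finset.card_range]
  exact ⟨((monoEquivOfFin E rfl).symm.toOrderEmbedding.trans
    ((s.orderIsoOfFin hs).toOrderEmbedding.trans (OrderEmbedding.subtype _)))⟩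

lemma exists_mono_map_of_total {I : Type u} [LinearOrder I] {T : Type u} (le : T → T → Prop)
    (hrefl : ∀ a, le a a) (htrans : ∀ a b c, le a b → le b c → le a c)
    (htot : ∀ a b, le a b ∨ le b a)
    (c : Cardinal.{u}) (hT : #T ≤ c)
    (univ : ∀ (A : Type u) [LinearOrder A], #A ≤ c → Nonempty (A ↪o I)) :
    ∃ h : T → I, ∀ p q, (h p < h q ↔ (le p q ∧ ¬ le q p)) ∧ (h p = h q ↔ (le p q ∧ le q p)) := by
  letI pre : Preorder T := { le := le, le_refl := hrefl, le_trans := htrans }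
  haveI : IsTotal T (· ≤ ·) := ⟨htot⟩
  letI : DecidableRel (α := T) (· ≤ ·) := Classical.decRel _
  letI : DecidableRel (α := T) (· < ·) := Classical.decRel _
  have hcard : #(Antisymmetrization T (· ≤ ·)) ≤ c := le_trans Cardinal.mk_quotient_le hT
  obtain ⟨e⟩ := univ _ hcard
  refine ⟨fun p => e (toAntisymmetrization (· ≤ ·) p), fun p q => ⟨?_, ?_⟩⟩
  · rw [e.lt_iff_lt, toAntisymmetrization_lt_toAntisymmetrization_iff]
    exact lt_iff_le_not_ge
  · rw [e.injective.eq_iff]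
    constructor
    · intro h
      have := Quotient.exact h
      exact ⟨this.1, this.2⟩
    · intro h
      exact Quotient.sound ⟨h.1, h.2⟩

section St12Aux

variable {I₁ : Type*} [LinearOrder I₁] {Θ : Type*}

/-- auxiliary: the two-sided pattern order `cLT`: the point set of coordinate `i`
lies entirely below that of `j`. -/
def St12cLT (T : ℕ → Θ → I₁) (i j : Θ) : Prop :=
  T 0 i < T 1 j ∧ T 1 i < T 0 j ∧ T 0 i < T 0 j

/-- auxiliary: same class (overlapping point sets). -/
def St12cEQ (T : ℕ → Θ → I₁) (i j : Θ) : Prop :=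
  ¬ St12cLT T i j ∧ ¬ St12cLT T j i

/-- auxiliary: transfer property for the pattern of an indiscernible sequence. -/
def St12TR (T : ℕ → Θ → I₁) : Prop :=
  ∀ (m k m' k' : ℕ), (m < k → m' < k') → (m = k → m' = k') → (k < m → k' < m') →
    ∀ i j, ((T m i < T k j ↔ T m' i < T k' j) ∧ (T m i = T k j ↔ T m' i = T k' j))

variable {T : ℕ → Θ → I₁}

theorem St12trle (tr : St12TR T) (m k m' k' : ℕ) (c1 : m < k → m' < k')
    (c2 : m = k → m' = k') (c3 : k < m → k' < m') (i j : Θ) :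
    T m i ≤ T k j ↔ T m' i ≤ T k' j := by
  rw [← not_lt, ← not_lt]
  exact not_iff_not.mpr (tr k m k' m' c3 (fun h => (c2 h.symm).symm) c1 j i).1

theorem St12all (tr : St12TR T) {i j : Θ} (h : St12cLT T i j) (m k : ℕ) :
    T m i < T k j := by
  obtain ⟨hp, hq, hs⟩ := h
  rcases Nat.lt_trichotomy m k with h' | h' | h'
  · exact (tr 0 1 m k (fun _ => h') (by omega) (by omega) i j).1.mp hp
  · subst h'; exact (tr 0 0 m m (by omega) (fun _ => rfl) (by omega) i j).1.mp hs
  · exact (tr 1 0 m k (by omega) (by omega) (fun _ => h') i j).1.mp hq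

theorem St12const (tr : St12TR T) {i : Θ} (h : T 0 i = T 1 i) (m k : ℕ) :
    T m i = T k i := by
  rcases Nat.lt_trichotomy m k with h' | h' | h'
  · exact (tr 0 1 m k (fun _ => h') (by omega) (by omega) i i).2.mp h
  · subst h'; rfl
  · exact (tr 1 0 m k (by omega) (by omega) (fun _ => h') i i).2.mp h.symm

theorem St12peq (tr : St12TR T) {i j : Θ} (h : T 0 i = T 1 j) :
    T 0 i = T 1 i ∧ T 0 j = T 1 j ∧ T 0 i = T 0 j := by
  have h02 : T 0 i = T 2 j := (tr 0 1 0 2 (by omega) (by omega) (by omega) i j).2.mp h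
  have h12 : T 1 i = T 2 j := (tr 0 1 1 2 (by omega) (by omega) (by omega) i j).2.mp h
  have hcj' : T 1 j = T 2 j := h.symm.trans h02
  have hcj : T 0 j = T 1 j := (tr 1 2 0 1 (by omega) (by omega) (by omega) j j).2.mp hcj'
  exact ⟨h02.trans h12.symm, hcj, h.trans hcj.symm⟩

theorem St12slem (tr : St12TR T) {i j : Θ} (hp : T 0 i < T 1 j) (hq : T 1 i < T 0 j) :
    T 0 i < T 0 j := by
  by_contra hs
  push_neg at hs
  have hs1 : T 1 j ≤ T 1 i := (St12trle tr 0 0 1 1 (by omega) (by omega) (by omega) j i).mp hs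
  exact absurd (lt_trans (lt_of_lt_of_le hp hs1) (lt_of_lt_of_le hq hs)) (lt_irrefl _)

theorem St12ceq_refl (i : Θ) : St12cEQ T i i :=
  ⟨fun h => lt_irrefl _ h.2.2, fun h => lt_irrefl _ h.2.2⟩

theorem St12clt_asymm {i j : Θ} (h : St12cLT T i j) (h' : St12cLT T j i) : False :=
  absurd (lt_trans h.2.2 h'.2.2) (lt_irrefl _)

theorem St12clt_trans (tr : St12TR T) {i j k : Θ} (h1 : St12cLT T i j)
    (h2 : St12cLT T j k) : St12cLT T i k :=
  ⟨lt_trans (St12all tr h1 0 2) (St12all tr h2 2 1),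
   lt_trans (St12all tr h1 1 2) (St12all tr h2 2 0),
   lt_trans (St12all tr h1 0 2) (St12all tr h2 2 0)⟩

theorem St12clt_ceq (tr : St12TR T) {i j k : Θ} (hij : St12cLT T i j)
    (hjk : St12cEQ T j k) : St12cLT T i k := by
  by_contra hn
  apply hjk.2
  have hcases : ¬(T 0 i < T 1 k) ∨ ¬(T 1 i < T 0 k) ∨ ¬(T 0 i < T 0 k) := by
    by_contra hc; push_neg at hc; exact hn ⟨hc.1, hc.2.1, hc.2.2⟩
  rcases hcases with h | h | h <;> push_neg at h
  · refine ⟨?_, ?_, ?_⟩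
    · exact (tr 1 2 0 1 (by omega) (by omega) (by omega) k j).1.mp
        (lt_of_le_of_lt h (St12all tr hij 0 2))
    · have h21 : T 2 k ≤ T 1 i := (St12trle tr 1 0 2 1 (by omega) (by omega) (by omega) k i).mp h
      exact (tr 2 1 1 0 (by omega) (by omega) (by omega) k j).1.mp
        (lt_of_le_of_lt h21 (St12all tr hij 1 1))
    · have h21 : T 2 k ≤ T 1 i := (St12trle tr 1 0 2 1 (by omega) (by omega) (by omega) k i).mp h
      exact (tr 2 2 0 0 (by omega) (by omega) (by omega) k j).1.mp
        (lt_of_le_of_lt h21 (St12all tr hij 1 2))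
  · refine ⟨?_, ?_, ?_⟩
    · exact lt_of_le_of_lt h (St12all tr hij 1 1)
    · have h23 : T 2 k ≤ T 3 i := (St12trle tr 0 1 2 3 (by omega) (by omega) (by omega) k i).mp h
      exact (tr 2 1 1 0 (by omega) (by omega) (by omega) k j).1.mp
        (lt_of_le_of_lt h23 (St12all tr hij 3 1))
    · have h23 : T 2 k ≤ T 3 i := (St12trle tr 0 1 2 3 (by omega) (by omega) (by omega) k i).mp h
      exact (tr 2 2 0 0 (by omega) (by omega) (by omega) k j).1.mp
        (lt_of_le_of_lt h23 (St12all tr hij 3 2))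
  · refine ⟨?_, ?_, ?_⟩
    · exact lt_of_le_of_lt h (St12all tr hij 0 1)
    · have h22 : T 2 k ≤ T 2 i := (St12trle tr 0 0 2 2 (by omega) (by omega) (by omega) k i).mp h
      exact (tr 2 1 1 0 (by omega) (by omega) (by omega) k j).1.mp
        (lt_of_le_of_lt h22 (St12all tr hij 2 1))
    · exact lt_of_le_of_lt h (St12all tr hij 0 0)

theorem St12ceq_clt (tr : St12TR T) {i j k : Θ} (hij : St12cEQ T i j)
    (hjk : St12cLT T j k) : St12cLT T i k := by
  by_contra hn
  apply hij.2
  have hcases : ¬(T 0 i < T 1 k) ∨ ¬(T 1 i < T 0 k) ∨ ¬(T 0 i < T 0 k) := by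
    by_contra hc; push_neg at hc; exact hn ⟨hc.1, hc.2.1, hc.2.2⟩
  rcases hcases with h | h | h <;> push_neg at h
  · -- h : T 1 k ≤ T 0 i, shape (a<b): T b k ≤ T a i
    have h12 : T 2 k ≤ T 1 i := (St12trle tr 1 0 2 1 (by omega) (by omega) (by omega) k i).mp h
    refine ⟨?_, ?_, ?_⟩
    · exact lt_of_lt_of_le (St12all tr hjk 0 2) h12
    · exact lt_of_lt_of_le (St12all tr hjk 1 1) h
    · exact lt_of_lt_of_le (St12all tr hjk 0 1) h
  · -- h : T 0 k ≤ T 1 i, shape (m<k'): T m k ≤ T k' i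
    have h13 : T 1 k ≤ T 2 i := (St12trle tr 0 1 1 2 (by omega) (by omega) (by omega) k i).mp h
    refine ⟨?_, ?_, ?_⟩
    · exact lt_of_lt_of_le (St12all tr hjk 0 0) h
    · -- qLT j i at (2,1): T 2 j < T 0 k ≤ T 1 i
      exact (tr 2 1 1 0 (by omega) (by omega) (by omega) j i).1.mp
        (lt_of_lt_of_le (St12all tr hjk 2 0) h)
    · -- sLT j i at (2,2): T 2 j < T 1 k ≤ T 2 i
      exact (tr 2 2 0 0 (by omega) (by omega) (by omega) j i).1.mp
        (lt_of_lt_of_le (St12all tr hjk 2 1) h13)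
  · -- h : T 0 k ≤ T 0 i, equal blocks
    have h11 : T 1 k ≤ T 1 i := (St12trle tr 0 0 1 1 (by omega) (by omega) (by omega) k i).mp h
    refine ⟨?_, ?_, ?_⟩
    · exact lt_of_lt_of_le (St12all tr hjk 0 1) h11
    · exact lt_of_lt_of_le (St12all tr hjk 1 0) h
    · exact lt_of_lt_of_le (St12all tr hjk 0 0) h

theorem St12ceq_trans (tr : St12TR T) {i j k : Θ} (h1 : St12cEQ T i j)
    (h2 : St12cEQ T j k) : St12cEQ T i k := by
  constructor
  · intro h
    exact h1.1 (St12clt_ceq tr h ⟨h2.2, h2.1⟩)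
  · intro h
    exact h2.2 (St12clt_ceq tr h h1)

end St12Aux

section St12Aux2

variable {I₁ : Type*} [LinearOrder I₁] {Θ : Type*} {T : ℕ → Θ → I₁}

theorem St12ceq_const_mov (tr : St12TR T) {i j : Θ} (hij : St12cEQ T i j)
    (hconst : T 0 i = T 1 i) (hmov : T 0 j ≠ T 1 j) : False := by
  rcases lt_or_gt_of_ne hmov with hinc | hdec
  · rcases lt_trichotomy (T 0 i) (T 0 j) with h | h | h
    · exact hij.1 ⟨lt_trans h hinc, by rw [← hconst]; exact h, h⟩
    · have h11 : T 1 i = T 1 j := (tr 0 0 1 1 (by omega) (by omega) (by omega) i j).2.mp h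
      exact absurd (h.symm.trans (hconst.trans h11)) (ne_of_lt hinc)
    · rcases lt_trichotomy (T 1 j) (T 0 i) with h2 | h2 | h2
      · exact hij.2 ⟨by rw [← hconst]; exact h, h2, h⟩
      · exact absurd (St12peq tr h2.symm).2.1 (ne_of_lt hinc)
      · have h11 : T 1 j < T 1 i := (tr 0 0 1 1 (by omega) (by omega) (by omega) j i).1.mp h
        rw [← hconst] at h11
        exact absurd h2 (not_lt.mpr (le_of_lt h11))
  · rcases lt_trichotomy (T 0 i) (T 0 j) with h | h | h
    · rcases lt_trichotomy (T 0 i) (T 1 j) with h2 | h2 | h2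
      · exact hij.1 ⟨h2, by rw [← hconst]; exact h, h⟩
      · exact absurd (St12peq tr h2).2.1 (ne_of_gt hdec)
      · have h11 : T 1 i < T 1 j := (tr 0 0 1 1 (by omega) (by omega) (by omega) i j).1.mp h
        rw [← hconst] at h11
        exact absurd h2 (not_lt.mpr (le_of_lt h11))
    · have h11 : T 1 i = T 1 j := (tr 0 0 1 1 (by omega) (by omega) (by omega) i j).2.mp h
      exact absurd (h.symm.trans (hconst.trans h11)) (ne_of_gt hdec)
    · exact hij.2 ⟨by rw [← hconst]; exact h, lt_trans hdec h, h⟩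

theorem St12ceq_inc_dec (tr : St12TR T) {i j : Θ} (hij : St12cEQ T i j)
    (hinc : T 0 i < T 1 i) (hdec : T 1 j < T 0 j) : False := by
  rcases lt_trichotomy (T 0 i) (T 1 j) with h | h | h
  · rcases lt_trichotomy (T 1 i) (T 0 j) with h2 | h2 | h2
    · exact hij.1 ⟨h, h2, St12slem tr h h2⟩
    · exact absurd (St12peq tr h2.symm).1 (ne_of_gt hdec)
    · have h11 : T 1 i < T 1 j := (tr 0 0 1 1 (by omega) (by omega) (by omega) i j).1.mp
        (lt_trans h hdec)
      exact absurd h11 (not_lt.mpr (le_of_lt (lt_trans hdec h2)))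
  · exact absurd (St12peq tr h).2.1 (ne_of_gt hdec)
  · rcases lt_trichotomy (T 0 j) (T 1 i) with h2 | h2 | h2
    · exact hij.2 ⟨h2, h, St12slem tr h2 h⟩
    · exact absurd (St12peq tr h2).1 (ne_of_gt hdec)
    · have h11 : T 1 i < T 1 j := (tr 0 0 1 1 (by omega) (by omega) (by omega) i j).1.mp
        (lt_trans hinc h2)
      exact absurd h11 (not_lt.mpr (le_of_lt (lt_trans h hinc)))

theorem St12ceq_const_const (tr : St12TR T) {i j : Θ} (hij : St12cEQ T i j)
    (hci : T 0 i = T 1 i) (hcj : T 0 j = T 1 j) : T 0 i = T 0 j := by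
  by_contra hne
  rcases Ne.lt_or_gt hne with h | h
  · exact hij.1 ⟨by rw [← hcj]; exact h, by rw [← hci]; exact h, h⟩
  · exact hij.2 ⟨by rw [← hci]; exact h, by rw [← hcj]; exact h, h⟩

theorem St12ceq_inc_inc (tr : St12TR T) {i j : Θ} (hij : St12cEQ T i j)
    (hinci : T 0 i < T 1 i) (hincj : T 0 j < T 1 j) : T 0 i < T 1 j := by
  by_contra hn
  push_neg at hn
  rcases eq_or_lt_of_le hn with he | hlt
  · exact absurd (St12peq tr he.symm).1 (ne_of_lt hinci)
  · exact hij.2 ⟨lt_trans hincj (lt_trans hlt hinci), hlt, lt_trans hincj hlt⟩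

theorem St12ceq_dec_dec (tr : St12TR T) {i j : Θ} (hij : St12cEQ T i j)
    (hdeci : T 1 i < T 0 i) (hdecj : T 1 j < T 0 j) : T 1 j < T 0 i := by
  by_contra hn
  push_neg at hn
  rcases eq_or_lt_of_le hn with he | hlt
  · exact absurd (St12peq tr he).1 (ne_of_gt hdeci)
  · exact hij.1 ⟨hlt, lt_trans hdeci (lt_trans hlt hdecj), lt_trans hlt hdecj⟩

end St12Aux2

section St12Aux3

variable {I : Type*} [LinearOrder I] {I₀ : Set I} {I₁ : Type*} [LinearOrder I₁] {Θ : Type*}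

/-- auxiliary: the region of `I` corresponding to the cut of `I₀` realized by
the coordinate `i`. -/
def St12REG (e₀ : I₀ ↪o I₁) (T : ℕ → Θ → I₁) (i : Θ) : Set I :=
  {x | ∀ s : I₀, (e₀ s < T 0 i → (s : I) < x) ∧ (T 0 i < e₀ s → x < (s : I))}

/-- auxiliary: the region of `i` contains two distinct points. -/
def St12Mult (e₀ : I₀ ↪o I₁) (T : ℕ → Θ → I₁) (i : Θ) : Prop :=
  ∃ p : I × I, p.1 < p.2 ∧ p.1 ∈ St12REG e₀ T i ∧ p.2 ∈ St12REG e₀ T i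

/-- auxiliary: coordinates `i` and `j` realize the same cut of `I₀`. -/
def St12SC (e₀ : I₀ ↪o I₁) (T : ℕ → Θ → I₁) (i j : Θ) : Prop :=
  ∀ s : I₀, (T 0 i < e₀ s ↔ T 0 j < e₀ s) ∧ (e₀ s < T 0 i ↔ e₀ s < T 0 j)

theorem St12SC_symm {e₀ : I₀ ↪o I₁} {T : ℕ → Θ → I₁} {i j : Θ}
    (h : St12SC e₀ T i j) : St12SC e₀ T j i :=
  fun s => ⟨(h s).1.symm, (h s).2.symm⟩

theorem St12REG_eq {e₀ : I₀ ↪o I₁} {T : ℕ → Θ → I₁} {i j : Θ}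
    (h : St12SC e₀ T i j) : St12REG e₀ T i = St12REG e₀ T j := by
  ext x
  constructor
  · intro hx s
    exact ⟨fun h1 => (hx s).1 ((h s).2.mpr h1), fun h1 => (hx s).2 ((h s).1.mpr h1)⟩
  · intro hx s
    exact ⟨fun h1 => (hx s).1 ((h s).2.mp h1), fun h1 => (hx s).2 ((h s).1.mp h1)⟩

theorem St12Mult_iff {e₀ : I₀ ↪o I₁} {T : ℕ → Θ → I₁} {i j : Θ}
    (h : St12SC e₀ T i j) : St12Mult e₀ T i ↔ St12Mult e₀ T j := by
  unfold St12Mult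
  rw [St12REG_eq h]

theorem St12SC_inI0 {e₀ : I₀ ↪o I₁} {T : ℕ → Θ → I₁} {i j : Θ}
    (h : St12SC e₀ T i j) (hin : ∃ s : I₀, T 0 i = e₀ s) : ∃ s : I₀, T 0 j = e₀ s := by
  obtain ⟨s, hs⟩ := hin
  refine ⟨s, ?_⟩
  have h1 : ¬(T 0 j < e₀ s) := fun hh => absurd ((h s).1.mpr hh) (by rw [hs]; exact lt_irrefl _)
  have h2 : ¬(e₀ s < T 0 j) := fun hh => absurd ((h s).2.mpr hh) (by rw [hs]; exact lt_irrefl _)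
  rcases lt_trichotomy (T 0 j) (e₀ s) with h' | h' | h'
  · exact absurd h' h1
  · exact h'
  · exact absurd h' h2

end St12Aux3
theorem stmt_12 (μ θ par : Cardinal.{u}) (I : Type u) [LinearOrder I]
    (hθpar : θ < par) (hreg : par.IsRegular) (h2θpar : 2 ^ θ < par) (h2θμ : 2 ^ θ ≤ μ)
    (hI : #I = μ)
    -- the properties (i)–(iv) of `I`
    (hi : CutIsolatedSmall I θ) (hii : SelfEmbedsIntervals I)
    (hiii : UnivForSmall I θ) (hiv : LongMonotone I μ)
    -- (A)(a),(b): `I₀ ⊆ I` of cardinality `≤ θ`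
    (I₀ : Set I) (hI₀ : #I₀ ≤ θ)
    -- (A)(c): `I₁` is a linear order extending `I₀`
    (I₁ : Type u) [LinearOrder I₁] (e₀ : I₀ ↪o I₁)
    -- the index set of the `θ`-tuples
    (Θ : Type u) (hΘ : #Θ = θ)
    -- (A)(d): `u_n ⊆ u_{n+1} ⊆ θ = ⋃ₙ u_n`
    (u : ℕ → Set Θ) (humono : Monotone u) (huunion : (⋃ n, u n) = Set.univ)
    -- (A)(e): `⟨t̄¹_α : α < ∂⟩` is an indiscernible sequence in `I₁` over `I₀`
    (t1 : Ordinal.{u} → Θ → I₁)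
    (hind : IndiscBdd (Set.range e₀) par.ord t1)
    -- (A)(f): for every `n`, `I_{1,n}` order-embeds into `I` over `I₀`
    (hemb : ∀ n : ℕ, ∃ f : I₁ → I,
      (∀ x y : I₁,
        (x ∈ Set.range e₀ ∪ {z | ∃ α < par.ord, ∃ i ∈ u n, z = t1 α i}) →
        (y ∈ Set.range e₀ ∪ {z | ∃ α < par.ord, ∃ i ∈ u n, z = t1 α i}) →
        (x < y ↔ f x < f y)) ∧
      ∀ s : I₀, f (e₀ s) = (s : I)) :
    -- (B): there is an indiscernible sequence `⟨t̄_α : α < μ⟩` in `I` over `I₀`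
    -- realizing the same finite quantifier-free types over `I₀` as `⟨t̄¹_α : α < ∂⟩`
    ∃ t2 : Ordinal.{u} → Θ → I,
      IndiscBdd I₀ μ.ord t2 ∧
      ∀ n : ℕ, SameQfType2 I₀ (fun b => e₀ b)
        (fun q : Fin (n + 1) × Θ => t2 ((q.1 : ℕ) : Ordinal.{u}) q.2)
        (fun q : Fin (n + 1) × Θ => t1 ((q.1 : ℕ) : Ordinal.{u}) q.2) := by

  classical
  -- I is nonempty
  have hμ1 : (1 : Cardinal) ≤ μ := le_trans (Cardinal.one_le_iff_ne_zero.mpr (Cardinal.power_ne_zero θ two_ne_zero)) h2θμ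
  have hIne : Nonempty I := by
    rw [← Cardinal.mk_ne_zero_iff, hI]
    exact Cardinal.one_le_iff_ne_zero.mp hμ1
  letI : Inhabited I := Classical.inhabited_of_nonempty hIne
  rcases isEmpty_or_nonempty Θ with hΘe | hΘne
  · -- degenerate case : Θ is empty
    refine ⟨fun _ _ => default, ?_, ?_⟩
    · intro n a b _ _ _ _
      refine ⟨fun q => (hΘe.elim q.2), fun q => (hΘe.elim q.2), fun q => (hΘe.elim q.2)⟩
    · intro n
      refine ⟨fun q => (hΘe.elim q.2), fun q => (hΘe.elim q.2), fun q => (hΘe.elim q.2)⟩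
  -- main case
  have hθ1 : (1 : Cardinal) ≤ θ := by
    rw [← hΘ]
    exact Cardinal.one_le_iff_ne_zero.mpr (Cardinal.mk_ne_zero_iff.mpr hΘne)
  have h2I : (2 : Cardinal) ≤ #I := by
    rw [hI]
    calc (2 : Cardinal) = 2 ^ (1 : Cardinal) := (Cardinal.power_one 2).symm
    _ ≤ 2 ^ θ := Cardinal.power_le_power_left two_ne_zero hθ1
    _ ≤ μ := h2θμ
  have hInf : Infinite I := by
    by_contra hfin
    haveI : Finite I := not_infinite_iff_finite.mp hfin
    haveI : Fintype I := Fintype.ofFinite I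
    obtain ⟨x, y, hxy⟩ := Cardinal.two_le_iff.mp h2I
    rcases hxy.lt_or_gt with hab | hab
    case _ =>
      obtain ⟨g⟩ := hii x y hab
      have hinj : Function.Injective (fun z => (g z : I)) := fun p q h => g.injective (Subtype.ext h)
      obtain ⟨z, hz⟩ := (Finite.injective_iff_surjective.mp hinj) x
      exact absurd ((g z).2.1) (by rw [show ((g z : I)) = x from hz]; exact lt_irrefl x)
    case _ =>
      obtain ⟨g⟩ := hii y x hab
      have hinj : Function.Injective (fun z => (g z : I)) := fun p q h => g.injective (Subtype.ext h)
      obtain ⟨z, hz⟩ := (Finite.injective_iff_surjective.mp hinj) y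
      exact absurd ((g z).2.1) (by rw [show ((g z : I)) = y from hz]; exact lt_irrefl y)
  have hμinf : ℵ₀ ≤ μ := by rw [← hI]; exact Cardinal.aleph0_le_mk I
  have hords : ∀ n : ℕ, (n : Ordinal) < par.ord := by
    intro n
    refine lt_of_lt_of_le (Ordinal.nat_lt_omega0 n) ?_
    rw [← Cardinal.ord_aleph0]
    exact Cardinal.ord_le_ord.mpr hreg.aleph0_le
  have hnatμ : ∀ n : ℕ, (n : Ordinal) < μ.ord := by
    intro n
    refine lt_of_lt_of_le (Ordinal.nat_lt_omega0 n) ?_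
    rw [← Cardinal.ord_aleph0]
    exact Cardinal.ord_le_ord.mpr hμinf
  have hlim : Order.IsSuccLimit μ.ord := Cardinal.isSuccLimit_ord hμinf
  -- notation: blocks indexed by naturals
  set T : ℕ → Θ → I₁ := fun m i => t1 m i with hTdef
  -- transfer lemmas from indiscernibility
  have TT2 : ∀ (m k m' k' : ℕ), m < k → m' < k' → ∀ i j,
      ((T m i < T k j ↔ T m' i < T k' j) ∧ (T m i = T k j ↔ T m' i = T k' j)
       ∧ (T k i < T m j ↔ T k' i < T m' j) ∧ (T k i = T m j ↔ T k' i = T m' j)) := by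
    intro m k m' k' h h' i j
    have H := hind 2 ![(m : Ordinal), (k : Ordinal)] ![(m' : Ordinal), (k' : Ordinal)]
      (by intro l; fin_cases l <;> simp <;> exact hords _)
      (by intro l; fin_cases l <;> simp <;> exact hords _)
      (sm2' (show ((m : Ordinal.{u}) < (k : Ordinal.{u})) by exact_mod_cast h))
      (sm2' (show ((m' : Ordinal.{u}) < (k' : Ordinal.{u})) by exact_mod_cast h'))
    obtain ⟨H1, H2, _⟩ := H
    refine ⟨?_, ?_, ?_, ?_⟩
    · simpa using H1 (0, i) (1, j)
    · simpa using H2 (0, i) (1, j)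
    · simpa using H1 (1, i) (0, j)
    · simpa using H2 (1, i) (0, j)
  have TT1 : ∀ (m m' : ℕ) , ∀ i j,
      ((T m i < T m j ↔ T m' i < T m' j) ∧ (T m i = T m j ↔ T m' i = T m' j)) := by
    intro m m' i j
    have H := hind 1 ![(m : Ordinal)] ![(m' : Ordinal)]
      (by intro l; fin_cases l <;> simp <;> exact hords _)
      (by intro l; fin_cases l <;> simp <;> exact hords _)
      (sm1' _) (sm1' _)
    obtain ⟨H1, H2, _⟩ := H
    exact ⟨by simpa using H1 (0, i) (0, j), by simpa using H2 (0, i) (0, j)⟩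
  have TT0 : ∀ (m m' : ℕ), ∀ i (s : I₀),
      ((T m i < e₀ s ↔ T m' i < e₀ s) ∧ (e₀ s < T m i ↔ e₀ s < T m' i)
        ∧ (T m i = e₀ s ↔ T m' i = e₀ s)) := by
    intro m m' i s
    have H := hind 1 ![(m : Ordinal)] ![(m' : Ordinal)]
      (by intro l; fin_cases l <;> simp <;> exact hords _)
      (by intro l; fin_cases l <;> simp <;> exact hords _)
      (sm1' _) (sm1' _)
    obtain ⟨_, _, H3⟩ := H
    have := H3 (0, i) (e₀ s) ⟨s, rfl⟩
    exact ⟨by simpa using this.1, by simpa using this.2.1, by simpa using this.2.2⟩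
  -- master transfer: relations only depend on the order type of the block indices
  have TR : ∀ (m k m' k' : ℕ), (m < k → m' < k') → (m = k → m' = k') → (k < m → k' < m') →
      ∀ i j, ((T m i < T k j ↔ T m' i < T k' j) ∧ (T m i = T k j ↔ T m' i = T k' j)) := by
    intro m k m' k' c1 c2 c3 i j
    rcases Nat.lt_trichotomy m k with h | h | h
    · exact ⟨(TT2 m k m' k' h (c1 h) i j).1, (TT2 m k m' k' h (c1 h) i j).2.1⟩
    · subst h
      rcases c2 rfl
      exact TT1 m m' i j
    · exact ⟨(TT2 k m k' m' h (c3 h) i j).2.2.1, (TT2 k m k' m' h (c3 h) i j).2.2.2⟩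
  have TRle : ∀ (m k m' k' : ℕ), (m < k → m' < k') → (m = k → m' = k') → (k < m → k' < m') →
      ∀ i j, (T m i ≤ T k j ↔ T m' i ≤ T k' j) := by
    intro m k m' k' c1 c2 c3 i j
    rw [← not_lt, ← not_lt]
    exact not_iff_not.mpr (TR k m k' m' c3 (fun h => (c2 h.symm).symm) c1 j i).1
  have tr : St12TR T := TR
  haveI : Infinite I := hInf
  -- universality for orders of size at most θ * 3
  have univ3 : ∀ (E : Type u) [LinearOrder E], #E ≤ θ * 3 → Nonempty (E ↪o I) := by
    intro E _ hE
    rcases le_or_gt ℵ₀ θ with hθ | hθ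
    · refine hiii E (hE.trans ?_)
      calc θ * 3 ≤ θ * θ := mul_le_mul_right ((Cardinal.nat_lt_aleph0 3).le.trans hθ) θ
      _ = θ := Cardinal.mul_eq_self hθ
    · have hE' : #E < ℵ₀ := lt_of_le_of_lt hE (Cardinal.mul_lt_aleph0 hθ (Cardinal.nat_lt_aleph0 3))
      haveI : Finite E := Cardinal.lt_aleph0_iff_finite.mp hE'
      exact exists_orderEmb_finite E
  -- the within-block position map
  obtain ⟨g, hg⟩ := exists_mono_map_of_total (I := I) (T := Θ) (fun i j => T 0 i ≤ T 0 j)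
    (fun i => le_refl _) (fun a b c => le_trans) (fun a b => le_total _ _)
    (θ * 3) (le_trans (le_of_eq hΘ) (by calc θ = θ * 1 := (mul_one θ).symm
      _ ≤ θ * 3 := mul_le_mul_right (by norm_num) θ)) univ3
  have hglt : ∀ i j, g i < g j ↔ T 0 i < T 0 j := fun i j => by
    rw [(hg i j).1]; exact (lt_iff_le_not_ge).symm
  have hgeq : ∀ i j, g i = g j ↔ T 0 i = T 0 j := fun i j => by
    rw [(hg i j).2]; exact (le_antisymm_iff).symm
  -- the class-skeleton map
  have hcardTB : #(Θ × Bool) ≤ θ * 3 := by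
    have : #(Θ × Bool) = #Θ * 2 := by
      rw [Cardinal.mk_prod, Cardinal.mk_bool]
      simp
    rw [this, hΘ]
    exact mul_le_mul_right (by norm_num) θ
  obtain ⟨h3, hh3⟩ := exists_mono_map_of_total (I := I) (T := Θ × Bool)
    (fun p q => St12cLT T p.1 q.1 ∨ (St12cEQ T p.1 q.1 ∧ p.2 ≤ q.2))
    (fun p => Or.inr ⟨St12ceq_refl p.1, le_refl _⟩)
    (by
      rintro p q r (h1 | ⟨h1, hb1⟩) (h2 | ⟨h2, hb2⟩)
      · exact Or.inl (St12clt_trans tr h1 h2)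
      · exact Or.inl (St12clt_ceq tr h1 h2)
      · exact Or.inl (St12ceq_clt tr h1 h2)
      · exact Or.inr ⟨St12ceq_trans tr h1 h2, le_trans hb1 hb2⟩)
    (by
      intro p q
      by_cases h1 : St12cLT T p.1 q.1
      · exact Or.inl (Or.inl h1)
      by_cases h2 : St12cLT T q.1 p.1
      · exact Or.inr (Or.inl h2)
      rcases le_total p.2 q.2 with hb | hb
      · exact Or.inl (Or.inr ⟨⟨h1, h2⟩, hb⟩)
      · exact Or.inr (Or.inr ⟨⟨h2, h1⟩, hb⟩))
    (θ * 3) hcardTB univ3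
  -- the anchors of each class
  have hA02 : ∀ i : Θ, h3 (i, false) < h3 (i, true) := by
    intro i
    rw [(hh3 (i, false) (i, true)).1]
    refine ⟨Or.inr ⟨St12ceq_refl i, by simp⟩, ?_⟩
    rintro (h | ⟨-, hb⟩)
    · exact St12clt_asymm h h
    · simp only [] at hb
      exact absurd hb (by simp)
  have hAlt : ∀ i j : Θ, St12cLT T i j → h3 (i, true) < h3 (j, false) := by
    intro i j hij
    rw [(hh3 (i, true) (j, false)).1]
    refine ⟨Or.inl hij, ?_⟩
    rintro (h | ⟨h, -⟩)
    · exact St12clt_asymm hij h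
    · exact h.2 hij
  have hAeq : ∀ i j : Θ, St12cEQ T i j → ∀ b, h3 (i, b) = h3 (j, b) := by
    intro i j hij b
    rw [(hh3 (i, b) (j, b)).2]
    exact ⟨Or.inr ⟨hij, le_refl _⟩, Or.inr ⟨⟨hij.2, hij.1⟩, le_refl _⟩⟩
  -- the embeddings of the suborders I₁ₙn into I
  choose f hf1 hf2 using hemb
  have hVe : ∀ (n : ℕ) (s : I₀),
      e₀ s ∈ Set.range ⇑e₀ ∪ {z | ∃ α < par.ord, ∃ i ∈ u n, z = t1 α i} :=
    fun n s => Or.inl ⟨s, rfl⟩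
  have hVt : ∀ (n m : ℕ) (i : Θ), i ∈ u n →
      T m i ∈ Set.range ⇑e₀ ∪ {z | ∃ α < par.ord, ∃ i ∈ u n, z = t1 α i} :=
    fun n m i hi => Or.inr ⟨(m : Ordinal), hords m, i, hi, rfl⟩
  have hex : ∀ i : Θ, ∃ n, i ∈ u n := by
    intro i
    have : i ∈ ⋃ n, u n := by rw [huunion]; trivial
    exact Set.mem_iUnion.mp this
  have fREG : ∀ (n : ℕ) (i : Θ), i ∈ u n → ∀ m : ℕ, f n (T m i) ∈ St12REG e₀ T i := by
    intro n i hi m s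
    constructor
    · intro hs
      have hs' : e₀ s < T m i := (TT0 0 m i s).2.1.mp hs
      have := (hf1 n (e₀ s) (T m i) (hVe n s) (hVt n m i hi)).mp hs'
      rwa [hf2 n s] at this
    · intro hs
      have hs' : T m i < e₀ s := (TT0 0 m i s).1.mp hs
      have := (hf1 n (T m i) (e₀ s) (hVt n m i hi) (hVe n s)).mp hs'
      rwa [hf2 n s] at this
  -- a moving coordinate has a region with two points
  have MultMov : ∀ i : Θ, T 0 i ≠ T 1 i → St12Mult e₀ T i := by
    intro i hmov
    obtain ⟨n, hn⟩ := hex i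
    rcases lt_or_gt_of_ne hmov with h | h
    · exact ⟨(f n (T 0 i), f n (T 1 i)),
        (hf1 n _ _ (hVt n 0 i hn) (hVt n 1 i hn)).mp h, fREG n i hn 0, fREG n i hn 1⟩
    · exact ⟨(f n (T 1 i), f n (T 0 i)),
        (hf1 n _ _ (hVt n 1 i hn) (hVt n 0 i hn)).mp h, fREG n i hn 1, fREG n i hn 0⟩
  -- two coordinates with the same cut but different values give two points
  have MultPair : ∀ i j : Θ, St12SC e₀ T i j → T 0 i ≠ T 0 j → St12Mult e₀ T i := by
    intro i j hsc hne
    obtain ⟨n1, hn1⟩ := hex i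
    obtain ⟨n2, hn2⟩ := hex j
    have hn1' : i ∈ u (max n1 n2) := humono (le_max_left n1 n2) hn1
    have hn2' : j ∈ u (max n1 n2) := humono (le_max_right n1 n2) hn2
    set n := max n1 n2
    have hjR : f n (T 0 j) ∈ St12REG e₀ T i := by
      rw [St12REG_eq hsc]
      exact fREG n j hn2' 0
    rcases lt_or_gt_of_ne hne with h | h
    · exact ⟨(f n (T 0 i), f n (T 0 j)),
        (hf1 n _ _ (hVt n 0 i hn1') (hVt n 0 j hn2')).mp h, fREG n i hn1' 0, hjR⟩
    · exact ⟨(f n (T 0 j), f n (T 0 i)),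
        (hf1 n _ _ (hVt n 0 j hn2') (hVt n 0 i hn1')).mp h, hjR, fREG n i hn1' 0⟩
  -- the fixed point chosen for a constant coordinate, through its value
  have hPTex : ∀ i : Θ, ∃ n : ℕ,
      T 0 i ∈ Set.range ⇑e₀ ∪ {z | ∃ α < par.ord, ∃ i ∈ u n, z = t1 α i} := by
    intro i
    obtain ⟨n, hn⟩ := hex i
    exact ⟨n, hVt n 0 i hn⟩
  set PTv : I₁ → I := fun v =>
    if h : ∃ n : ℕ, v ∈ Set.range ⇑e₀ ∪ {z | ∃ α < par.ord, ∃ i ∈ u n, z = t1 α i}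
    then f h.choose v else default with hPTv
  have PTval : ∀ i j : Θ, T 0 i = T 0 j → PTv (T 0 i) = PTv (T 0 j) := by
    intro i j h
    rw [h]
  have PTreg : ∀ i : Θ, PTv (T 0 i) ∈ St12REG e₀ T i := by
    intro i
    have hx := hPTex i
    simp only [hPTv, dif_pos hx]
    intro s
    constructor
    · intro hs
      have := (hf1 hx.choose (e₀ s) (T 0 i) (hVe _ s) hx.choose_spec).mp hs
      rwa [hf2 _ s] at this
    · intro hs
      have := (hf1 hx.choose (T 0 i) (e₀ s) hx.choose_spec (hVe _ s)).mp hs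
      rwa [hf2 _ s] at this
  -- long monotone sequences
  obtain ⟨fA, hfA⟩ := hiv.1
  obtain ⟨fD, hfD⟩ := hiv.2
  have h0μ : (0 : Ordinal) < μ.ord := hlim.pos
  have succμ : ∀ α : Ordinal, α < μ.ord → α + 1 < μ.ord := by
    intro α h
    rw [Ordinal.add_one_eq_succ]
    exact hlim.succ_lt h
  have lt_add_one_self : ∀ α : Ordinal, α < α + 1 := by
    intro α
    rw [Ordinal.add_one_eq_succ]
    exact Order.lt_succ α
  have add_one_le_of_lt : ∀ α β : Ordinal, α < β → α + 1 ≤ β := by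
    intro α β h
    rw [Ordinal.add_one_eq_succ]
    exact Order.succ_le_of_lt h
  set eT := Ordinal.ToType.mk (o := μ.ord) with heT
  set νI : Ordinal → I := fun α => if h : α < μ.ord then fA (eT ⟨α, h⟩) else fA (eT ⟨0, h0μ⟩)
    with hνI
  set νD : Ordinal → I := fun α => if h : α < μ.ord then fD (eT ⟨α, h⟩) else fD (eT ⟨0, h0μ⟩)
    with hνD
  have νIlt : ∀ α β : Ordinal, α < β → β < μ.ord → νI α < νI β := by
    intro α β hab hβ
    have hα : α < μ.ord := lt_trans hab hβ
    simp only [hνI, dif_pos hα, dif_pos hβ]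
    exact hfA (by exact (OrderIso.lt_iff_lt eT).mpr (Subtype.mk_lt_mk.mpr hab))
  have νDlt : ∀ α β : Ordinal, α < β → β < μ.ord → νD β < νD α := by
    intro α β hab hβ
    have hα : α < μ.ord := lt_trans hab hβ
    simp only [hνD, dif_pos hα, dif_pos hβ]
    exact hfD (by exact (OrderIso.lt_iff_lt eT).mpr (Subtype.mk_lt_mk.mpr hab))
  -- embeddings of I into its intervals
  have hii' : ∀ a b : I, a < b → ∃ e : I ↪o I, ∀ x, e x ∈ Set.Ioo a b := by
    intro a b hab
    obtain ⟨e⟩ := hii a b hab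
    exact ⟨e.trans (OrderEmbedding.subtype _), fun x => (e x).2⟩
  set EOO : I × I → (I ↪o I) := fun p =>
    if h : p.1 < p.2 then (hii' p.1 p.2 h).choose
    else OrderEmbedding.ofStrictMono (fun x => x) strictMono_id with hEOO
  have EOOspec : ∀ p : I × I, p.1 < p.2 → ∀ x, EOO p x ∈ Set.Ioo p.1 p.2 := by
    intro p h x
    simp only [hEOO, dif_pos h]
    exact (hii' p.1 p.2 h).choose_spec x
  -- the ambient embedding into a region, depending only on the region
  set AMB : Set I → (I ↪o I) := fun S =>
    if h : ∃ p : I × I, p.1 < p.2 ∧ p.1 ∈ S ∧ p.2 ∈ S then EOO (h.choose.1, h.choose.2)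
    else OrderEmbedding.ofStrictMono (fun x => x) strictMono_id with hAMB
  have AMBspec : ∀ i : Θ, St12Mult e₀ T i → ∀ x, AMB (St12REG e₀ T i) x ∈ St12REG e₀ T i := by
    intro i hm x
    have hm' : ∃ p : I × I, p.1 < p.2 ∧ p.1 ∈ St12REG e₀ T i ∧ p.2 ∈ St12REG e₀ T i := hm
    simp only [hAMB, dif_pos hm']
    have hspec := hm'.choose_spec
    have hIoo := EOOspec (hm'.choose.1, hm'.choose.2) hspec.1 x
    intro s
    constructor
    · intro hs
      exact lt_trans ((hspec.2.1 s).1 hs) hIoo.1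
    · intro hs
      exact lt_trans hIoo.2 ((hspec.2.2 s).2 hs)
  -- the within-class placement of moving coordinates
  set LI : Ordinal → I → I := fun α v =>
    if h : α < μ.ord then EOO (νI α, νI (α + 1)) v else default with hLI
  set LD : Ordinal → I → I := fun α v =>
    if h : α < μ.ord then EOO (νD (α + 1), νD α) v else default with hLD
  have LIlt : ∀ (α β : Ordinal) (v w : I), α < β → β < μ.ord → LI α v < LI β w := by
    intro α β v w hab hβ
    have hα : α < μ.ord := lt_trans hab hβ
    simp only [hLI, dif_pos hα, dif_pos hβ]
    have h1 := EOOspec (νI α, νI (α + 1)) (νIlt _ _ (lt_add_one_self α) (succμ α hα)) v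
    have h2 := EOOspec (νI β, νI (β + 1)) (νIlt _ _ (lt_add_one_self β) (succμ β hβ)) w
    refine lt_of_lt_of_le h1.2 (le_trans ?_ (le_of_lt h2.1))
    rcases eq_or_lt_of_le (add_one_le_of_lt _ _ hab) with h | h
    · exact le_of_eq (by rw [h])
    · exact le_of_lt (νIlt _ _ h hβ)
  have LDlt : ∀ (α β : Ordinal) (v w : I), α < β → β < μ.ord → LD β w < LD α v := by
    intro α β v w hab hβ
    have hα : α < μ.ord := lt_trans hab hβ
    simp only [hLD, dif_pos hα, dif_pos hβ]
    have h1 := EOOspec (νD (α + 1), νD α) (νDlt _ _ (lt_add_one_self α) (succμ α hα)) v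
    have h2 := EOOspec (νD (β + 1), νD β) (νDlt _ _ (lt_add_one_self β) (succμ β hβ)) w
    refine lt_of_lt_of_le h2.2 (le_trans ?_ (le_of_lt h1.1))
    rcases eq_or_lt_of_le (add_one_le_of_lt _ _ hab) with h | h
    · exact le_of_eq (by rw [h])
    · exact le_of_lt (νDlt _ _ h hβ)
  have LIiff : ∀ (α : Ordinal) (v w : I), α < μ.ord →
      ((LI α v < LI α w ↔ v < w) ∧ (LI α v = LI α w ↔ v = w)) := by
    intro α v w h
    simp only [hLI, dif_pos h]
    exact ⟨(EOO _).lt_iff_lt, ⟨fun hh => (EOO _).injective hh, fun hh => by rw [hh]⟩⟩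
  have LDiff : ∀ (α : Ordinal) (v w : I), α < μ.ord →
      ((LD α v < LD α w ↔ v < w) ∧ (LD α v = LD α w ↔ v = w)) := by
    intro α v w h
    simp only [hLD, dif_pos h]
    exact ⟨(EOO _).lt_iff_lt, ⟨fun hh => (EOO _).injective hh, fun hh => by rw [hh]⟩⟩
  -- THE sequence
  set y : Ordinal → Θ → I := fun α i =>
    if h : ∃ s : I₀, T 0 i = e₀ s then ((h.choose : I₀) : I)
    else if St12Mult e₀ T i then
      AMB (St12REG e₀ T i) (EOO (h3 (i, false), h3 (i, true))
        (if T 0 i = T 1 i then default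
         else if T 0 i < T 1 i then LI α (g i) else LD α (g i)))
    else PTv (T 0 i) with hy
  -- cut conditions for y
  have YCUT : ∀ (i : Θ) (α : Ordinal) (s : I₀),
      ((y α i < (s : I) ↔ T 0 i < e₀ s) ∧ ((s : I) < y α i ↔ e₀ s < T 0 i)
        ∧ (y α i = (s : I) ↔ T 0 i = e₀ s)) := by
    intro i α s
    by_cases hin : ∃ s' : I₀, T 0 i = e₀ s'
    · simp only [hy, dif_pos hin]
      have hs0 : T 0 i = e₀ hin.choose := hin.choose_spec
      refine ⟨?_, ?_, ?_⟩
      · constructor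
        · intro h
          rw [hs0]
          exact e₀.lt_iff_lt.mpr (Subtype.coe_lt_coe.mp h)
        · intro h
          rw [hs0] at h
          exact Subtype.coe_lt_coe.mpr (e₀.lt_iff_lt.mp h)
      · constructor
        · intro h
          rw [hs0]
          exact e₀.lt_iff_lt.mpr (Subtype.coe_lt_coe.mp h)
        · intro h
          rw [hs0] at h
          exact Subtype.coe_lt_coe.mpr (e₀.lt_iff_lt.mp h)
      · constructor
        · intro h
          rw [hs0]
          exact congrArg e₀ (Subtype.coe_injective h)
        · intro h
          rw [hs0] at h
          exact congrArg _ (e₀.injective h)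
    · have hmem : y α i ∈ St12REG e₀ T i := by
        simp only [hy, dif_neg hin]
        by_cases hm : St12Mult e₀ T i
        · rw [if_pos hm]
          exact AMBspec i hm _
        · rw [if_neg hm]
          exact PTreg i
      have hne : T 0 i ≠ e₀ s := fun h => hin ⟨s, h⟩
      rcases lt_trichotomy (T 0 i) (e₀ s) with hc | hc | hc
      · have h1 : y α i < s := (hmem s).2 hc
        exact ⟨iff_of_true h1 hc, iff_of_false (asymm h1) (asymm hc),
          iff_of_false (ne_of_lt h1) hne⟩
      · exact absurd hc hne
      · have h1 : (s : I) < y α i := (hmem s).1 hc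
        exact ⟨iff_of_false (asymm h1) (asymm hc), iff_of_true h1 hc,
          iff_of_false (ne_of_gt h1) hne⟩
  -- separation when the cuts differ
  have SEP : ∀ i j : Θ, ¬ St12SC e₀ T i j →
      ((∀ m k : ℕ, T m i < T k j) ∧ (∀ α β : Ordinal, y α i < y β j)) ∨
      ((∀ m k : ℕ, T k j < T m i) ∧ (∀ α β : Ordinal, y β j < y α i)) := by
    intro i j hsc
    rw [St12SC, not_forall] at hsc
    obtain ⟨s, hs⟩ := hsc
    by_cases h1 : T 0 i < e₀ s <;> by_cases h2 : T 0 j < e₀ s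
    · exact absurd ⟨iff_of_true h1 h2, iff_of_false (asymm h1) (asymm h2)⟩ hs
    · left
      constructor
      · intro m k
        have hmi : T m i < e₀ s := (TT0 0 m i s).1.mp h1
        have hkj : ¬(T k j < e₀ s) := fun hh => h2 ((TT0 k 0 j s).1.mp hh)
        exact lt_of_lt_of_le hmi (not_lt.mp hkj)
      · intro α β
        have hyi : y α i < s := (YCUT i α s).1.mpr h1
        have hyj : ¬(y β j < s) := fun hh => h2 ((YCUT j β s).1.mp hh)
        exact lt_of_lt_of_le hyi (not_lt.mp hyj)
    · right
      constructor
      · intro m k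
        have hmi : T k j < e₀ s := (TT0 0 k j s).1.mp h2
        have hkj : ¬(T m i < e₀ s) := fun hh => h1 ((TT0 m 0 i s).1.mp hh)
        exact lt_of_lt_of_le hmi (not_lt.mp hkj)
      · intro α β
        have hyi : y β j < s := (YCUT j β s).1.mpr h2
        have hyj : ¬(y α i < s) := fun hh => h1 ((YCUT i α s).1.mp hh)
        exact lt_of_lt_of_le hyi (not_lt.mp hyj)
    · by_cases h3 : e₀ s < T 0 i <;> by_cases h4 : e₀ s < T 0 j
      · exact absurd ⟨iff_of_false h1 h2, iff_of_true h3 h4⟩ hs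
      · right
        have hj : T 0 j = e₀ s := by
          rcases lt_trichotomy (T 0 j) (e₀ s) with h | h | h
          · exact absurd h h2
          · exact h
          · exact absurd h h4
        constructor
        · intro m k
          have hkj : T k j = e₀ s := (TT0 0 k j s).2.2.mp hj
          rw [hkj]
          exact (TT0 0 m i s).2.1.mp h3
        · intro α β
          have hyj : y β j = s := (YCUT j β s).2.2.mpr hj
          rw [hyj]
          exact (YCUT i α s).2.1.mpr h3
      · left
        have hi0 : T 0 i = e₀ s := by
          rcases lt_trichotomy (T 0 i) (e₀ s) with h | h | h
          · exact absurd h h1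
          · exact h
          · exact absurd h h3
        constructor
        · intro m k
          have hmi : T m i = e₀ s := (TT0 0 m i s).2.2.mp hi0
          rw [hmi]
          exact (TT0 0 k j s).2.1.mp h4
        · intro α β
          have hyi : y α i = s := (YCUT i α s).2.2.mpr hi0
          rw [hyi]
          exact (YCUT j β s).2.1.mpr h4
      · exact absurd ⟨iff_of_false h1 h2, iff_of_false h3 h4⟩ hs
  -- the master comparison lemma
  have SPEC : ∀ (i j : Θ) (α β : Ordinal) (m k : ℕ), α < μ.ord → β < μ.ord →
      ((α < β ∧ m < k) ∨ (α = β ∧ m = k) ∨ (β < α ∧ k < m)) →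
      ((y α i < y β j ↔ T m i < T k j) ∧ (y α i = y β j ↔ T m i = T k j)) := by
    intro i j α β m k hα hβ hcase
    by_cases hsc : St12SC e₀ T i j
    · by_cases hi : ∃ s : I₀, T 0 i = e₀ s
      · have hj : ∃ s : I₀, T 0 j = e₀ s := St12SC_inI0 hsc hi
        have hsi : T 0 i = e₀ hi.choose := hi.choose_spec
        have hsj : T 0 j = e₀ hj.choose := hj.choose_spec
        have hTm : T m i = e₀ hi.choose := (TT0 0 m i hi.choose).2.2.mp hsi
        have hTk : T k j = e₀ hj.choose := (TT0 0 k j hj.choose).2.2.mp hsj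
        simp only [hy, dif_pos hi, dif_pos hj]
        constructor
        · rw [hTm, hTk]
          constructor
          · intro h
            exact e₀.lt_iff_lt.mpr (Subtype.coe_lt_coe.mp h)
          · intro h
            exact Subtype.coe_lt_coe.mpr (e₀.lt_iff_lt.mp h)
        · rw [hTm, hTk]
          constructor
          · intro h
            exact congrArg e₀ (Subtype.coe_injective h)
          · intro h
            exact congrArg _ (e₀.injective h)
      · have hj : ¬∃ s : I₀, T 0 j = e₀ s := fun hh => hi (St12SC_inI0 (St12SC_symm hsc) hh)
        by_cases hm : St12Mult e₀ T i
        · have hmj : St12Mult e₀ T j := (St12Mult_iff hsc).mp hm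
          simp only [hy, dif_neg hi, dif_neg hj, if_pos hm, if_pos hmj]
          rw [St12REG_eq hsc]
          rw [(AMB (St12REG e₀ T j)).lt_iff_lt, (AMB (St12REG e₀ T j)).injective.eq_iff]
          by_cases hcl : St12cLT T i j
          · have h1 := EOOspec (h3 (i, false), h3 (i, true)) (hA02 i)
            have h2 := EOOspec (h3 (j, false), h3 (j, true)) (hA02 j)
            have hylt : EOO (h3 (i, false), h3 (i, true))
                (if T 0 i = T 1 i then default
                 else if T 0 i < T 1 i then LI α (g i) else LD α (g i)) <
                EOO (h3 (j, false), h3 (j, true))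
                (if T 0 j = T 1 j then default
                 else if T 0 j < T 1 j then LI β (g j) else LD β (g j)) :=
              lt_trans (h1 _).2 (lt_trans (hAlt i j hcl) (h2 _).1)
            exact ⟨iff_of_true hylt (St12all tr hcl m k),
              iff_of_false (ne_of_lt hylt) (ne_of_lt (St12all tr hcl m k))⟩
          by_cases hcl' : St12cLT T j i
          · have h1 := EOOspec (h3 (i, false), h3 (i, true)) (hA02 i)
            have h2 := EOOspec (h3 (j, false), h3 (j, true)) (hA02 j)
            have hygt : EOO (h3 (j, false), h3 (j, true))
                (if T 0 j = T 1 j then default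
                 else if T 0 j < T 1 j then LI β (g j) else LD β (g j)) <
                EOO (h3 (i, false), h3 (i, true))
                (if T 0 i = T 1 i then default
                 else if T 0 i < T 1 i then LI α (g i) else LD α (g i)) :=
              lt_trans (h2 _).2 (lt_trans (hAlt j i hcl') (h1 _).1)
            exact ⟨iff_of_false (asymm hygt) (asymm (St12all tr hcl' k m)),
              iff_of_false (ne_of_gt hygt) (ne_of_gt (St12all tr hcl' k m))⟩
          have hceq : St12cEQ T i j := ⟨hcl, hcl'⟩
          rw [hAeq i j hceq false, hAeq i j hceq true]
          rw [(EOO (h3 (j, false), h3 (j, true))).lt_iff_lt,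
            (EOO (h3 (j, false), h3 (j, true))).injective.eq_iff]
          rcases lt_trichotomy (T 0 i) (T 1 i) with hki | hki | hki
          · rcases lt_trichotomy (T 0 j) (T 1 j) with hkj | hkj | hkj
            · -- both increasing
              rw [if_neg (ne_of_lt hki), if_pos hki, if_neg (ne_of_lt hkj), if_pos hkj]
              rcases hcase with ⟨hab, hmk⟩ | ⟨hab, hmk⟩ | ⟨hab, hmk⟩
              · have hylt : LI α (g i) < LI β (g j) := LIlt α β _ _ hab hβ
                have hpat : T m i < T k j :=
                  (tr 0 1 m k (fun _ => hmk) (by omega) (by omega) i j).1.mp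
                    (St12ceq_inc_inc tr hceq hki hkj)
                exact ⟨iff_of_true hylt hpat,
                  iff_of_false (ne_of_lt hylt) (ne_of_lt hpat)⟩
              · subst hab; subst hmk
                constructor
                · rw [(LIiff α (g i) (g j) hα).1, hglt]
                  exact (TT1 0 m i j).1
                · rw [(LIiff α (g i) (g j) hα).2, hgeq]
                  exact (TT1 0 m i j).2
              · have hygt : LI β (g j) < LI α (g i) := LIlt β α _ _ hab hα
                have hpat : T k j < T m i :=
                  (tr 0 1 k m (fun _ => hmk) (by omega) (by omega) j i).1.mp
                    (St12ceq_inc_inc tr ⟨hceq.2, hceq.1⟩ hkj hki)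
                exact ⟨iff_of_false (asymm hygt) (asymm hpat),
                  iff_of_false (ne_of_gt hygt) (ne_of_gt hpat)⟩
            · exact (St12ceq_const_mov tr ⟨hceq.2, hceq.1⟩ hkj (ne_of_lt hki)).elim
            · exact (St12ceq_inc_dec tr hceq hki hkj).elim
          · rcases lt_trichotomy (T 0 j) (T 1 j) with hkj | hkj | hkj
            · exact (St12ceq_const_mov tr hceq hki (ne_of_lt hkj)).elim
            · -- both constant
              rw [if_pos hki, if_pos hkj]
              have hval : T 0 i = T 0 j := St12ceq_const_const tr hceq hki hkj
              have hpat : T m i = T k j := by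
                calc T m i = T 0 i := (St12const tr hki m 0)
                _ = T 0 j := hval
                _ = T k j := (St12const tr hkj 0 k)
              refine ⟨iff_of_false (lt_irrefl _) ?_, iff_of_true rfl hpat⟩
              rw [hpat]
              exact lt_irrefl _
            · exact (St12ceq_const_mov tr hceq hki (ne_of_gt hkj)).elim
          · rcases lt_trichotomy (T 0 j) (T 1 j) with hkj | hkj | hkj
            · exact (St12ceq_inc_dec tr ⟨hceq.2, hceq.1⟩ hkj hki).elim
            · exact (St12ceq_const_mov tr ⟨hceq.2, hceq.1⟩ hkj (ne_of_gt hki)).elim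
            · -- both decreasing
              rw [if_neg (ne_of_gt hki), if_neg (not_lt_of_gt hki),
                if_neg (ne_of_gt hkj), if_neg (not_lt_of_gt hkj)]
              rcases hcase with ⟨hab, hmk⟩ | ⟨hab, hmk⟩ | ⟨hab, hmk⟩
              · have hygt : LD β (g j) < LD α (g i) := LDlt α β _ _ hab hβ
                have hpat : T k j < T m i :=
                  (tr 1 0 k m (by omega) (by omega) (fun _ => hmk) j i).1.mp
                    (St12ceq_dec_dec tr hceq hki hkj)
                exact ⟨iff_of_false (asymm hygt) (asymm hpat),
                  iff_of_false (ne_of_gt hygt) (ne_of_gt hpat)⟩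
              · subst hab; subst hmk
                constructor
                · rw [(LDiff α (g i) (g j) hα).1, hglt]
                  exact (TT1 0 m i j).1
                · rw [(LDiff α (g i) (g j) hα).2, hgeq]
                  exact (TT1 0 m i j).2
              · have hylt : LD α (g i) < LD β (g j) := LDlt β α _ _ hab hα
                have hpat : T m i < T k j :=
                  (tr 1 0 m k (by omega) (by omega) (fun _ => hmk) i j).1.mp
                    (St12ceq_dec_dec tr ⟨hceq.2, hceq.1⟩ hkj hki)
                exact ⟨iff_of_true hylt hpat,
                  iff_of_false (ne_of_lt hylt) (ne_of_lt hpat)⟩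
        · -- neither coordinate has a region with two points : constant, equal values
          have hmj : ¬ St12Mult e₀ T j := fun hh => hm ((St12Mult_iff hsc).mpr hh)
          simp only [hy, dif_neg hi, dif_neg hj, if_neg hm, if_neg hmj]
          have hval : T 0 i = T 0 j := by
            by_contra hne
            exact hm (MultPair i j hsc hne)
          have hconsti : T 0 i = T 1 i := by
            by_contra hne
            exact hm (MultMov i hne)
          have hconstj : T 0 j = T 1 j := by
            by_contra hne
            exact hmj (MultMov j hne)
          have hpat : T m i = T k j := by
            calc T m i = T 0 i := (St12const tr hconsti m 0)
            _ = T 0 j := hval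
            _ = T k j := (St12const tr hconstj 0 k)
          rw [hval]
          refine ⟨iff_of_false (lt_irrefl _) ?_, iff_of_true rfl hpat⟩
          rw [hpat]
          exact lt_irrefl _
    · rcases SEP i j hsc with ⟨hp, hy'⟩ | ⟨hp, hy'⟩
      · exact ⟨iff_of_true (hy' α β) (hp m k),
          iff_of_false (ne_of_lt (hy' α β)) (ne_of_lt (hp m k))⟩
      · exact ⟨iff_of_false (asymm (hy' α β)) (asymm (hp m k)),
          iff_of_false (ne_of_gt (hy' α β)) (ne_of_gt (hp m k))⟩
  refine ⟨y, ?_, ?_⟩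
  · -- indiscernibility over I₀
    intro n a b ha hb hma hmb
    refine ⟨?_, ?_, ?_⟩
    · intro q r
      rcases lt_trichotomy q.1 r.1 with h | h | h
      · exact ((SPEC q.2 r.2 (a q.1) (a r.1) 0 1 (ha _) (ha _)
          (Or.inl ⟨hma h, Nat.zero_lt_one⟩)).1).trans
          ((SPEC q.2 r.2 (b q.1) (b r.1) 0 1 (hb _) (hb _)
          (Or.inl ⟨hmb h, Nat.zero_lt_one⟩)).1).symm
      · exact ((SPEC q.2 r.2 (a q.1) (a r.1) 0 0 (ha _) (ha _)
          (Or.inr (Or.inl ⟨congrArg a h, rfl⟩))).1).trans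
          ((SPEC q.2 r.2 (b q.1) (b r.1) 0 0 (hb _) (hb _)
          (Or.inr (Or.inl ⟨congrArg b h, rfl⟩))).1).symm
      · exact ((SPEC q.2 r.2 (a q.1) (a r.1) 1 0 (ha _) (ha _)
          (Or.inr (Or.inr ⟨hma h, Nat.zero_lt_one⟩))).1).trans
          ((SPEC q.2 r.2 (b q.1) (b r.1) 1 0 (hb _) (hb _)
          (Or.inr (Or.inr ⟨hmb h, Nat.zero_lt_one⟩))).1).symm
    · intro q r
      rcases lt_trichotomy q.1 r.1 with h | h | h
      · exact ((SPEC q.2 r.2 (a q.1) (a r.1) 0 1 (ha _) (ha _)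
          (Or.inl ⟨hma h, Nat.zero_lt_one⟩)).2).trans
          ((SPEC q.2 r.2 (b q.1) (b r.1) 0 1 (hb _) (hb _)
          (Or.inl ⟨hmb h, Nat.zero_lt_one⟩)).2).symm
      · exact ((SPEC q.2 r.2 (a q.1) (a r.1) 0 0 (ha _) (ha _)
          (Or.inr (Or.inl ⟨congrArg a h, rfl⟩))).2).trans
          ((SPEC q.2 r.2 (b q.1) (b r.1) 0 0 (hb _) (hb _)
          (Or.inr (Or.inl ⟨congrArg b h, rfl⟩))).2).symm
      · exact ((SPEC q.2 r.2 (a q.1) (a r.1) 1 0 (ha _) (ha _)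
          (Or.inr (Or.inr ⟨hma h, Nat.zero_lt_one⟩))).2).trans
          ((SPEC q.2 r.2 (b q.1) (b r.1) 1 0 (hb _) (hb _)
          (Or.inr (Or.inr ⟨hmb h, Nat.zero_lt_one⟩))).2).symm
    · intro q b0 hb0
      have h1 := YCUT q.2 (a q.1) ⟨b0, hb0⟩
      have h2 := YCUT q.2 (b q.1) ⟨b0, hb0⟩
      exact ⟨h1.1.trans h2.1.symm, h1.2.1.trans h2.2.1.symm, h1.2.2.trans h2.2.2.symm⟩
  · -- same finite quantifier-free types as t1
    intro n
    refine ⟨?_, ?_, ?_⟩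
    · intro q r
      rcases lt_trichotomy (q.1 : ℕ) (r.1 : ℕ) with h | h | h
      · exact (SPEC q.2 r.2 _ _ (q.1 : ℕ) (r.1 : ℕ) (hnatμ _) (hnatμ _)
          (Or.inl ⟨by exact_mod_cast h, h⟩)).1
      · have h' : ((q.1 : ℕ) : Ordinal) = ((r.1 : ℕ) : Ordinal) := by exact_mod_cast h
        exact (SPEC q.2 r.2 _ _ (q.1 : ℕ) (r.1 : ℕ) (hnatμ _) (hnatμ _)
          (Or.inr (Or.inl ⟨h', h⟩))).1
      · exact (SPEC q.2 r.2 _ _ (q.1 : ℕ) (r.1 : ℕ) (hnatμ _) (hnatμ _)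
          (Or.inr (Or.inr ⟨by exact_mod_cast h, h⟩))).1
    · intro q r
      rcases lt_trichotomy (q.1 : ℕ) (r.1 : ℕ) with h | h | h
      · exact (SPEC q.2 r.2 _ _ (q.1 : ℕ) (r.1 : ℕ) (hnatμ _) (hnatμ _)
          (Or.inl ⟨by exact_mod_cast h, h⟩)).2
      · have h' : ((q.1 : ℕ) : Ordinal) = ((r.1 : ℕ) : Ordinal) := by exact_mod_cast h
        exact (SPEC q.2 r.2 _ _ (q.1 : ℕ) (r.1 : ℕ) (hnatμ _) (hnatμ _)
          (Or.inr (Or.inl ⟨h', h⟩))).2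
      · exact (SPEC q.2 r.2 _ _ (q.1 : ℕ) (r.1 : ℕ) (hnatμ _) (hnatμ _)
          (Or.inr (Or.inr ⟨by exact_mod_cast h, h⟩))).2
    · intro q s
      have h1 := YCUT q.2 ((q.1 : ℕ) : Ordinal) s
      have h2 := TT0 0 (q.1 : ℕ) q.2 s
      exact ⟨h1.1.trans h2.1, h1.2.1.trans h2.2.1, h1.2.2.trans h2.2.2⟩
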